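/- Let a, b, c ∈ ℝ and define, for real x > 1 and λ < 0, F(x, λ) = x^{−a}(x − 1)^{−b}(x − λ)^{−c} and h(x, λ) = x^{1−a}(x − 1)^{1−b}(x − λ)^{−1−c} (real powers of positive reals). Then the identity λ(1 − λ)·∂²F/∂λ² + (a + c − λ(a + b + 2c))·∂F/∂λ − c(a + b + c − 1)·F = c·∂h/∂x holds on this region. -/

import Mathlib

/-- Derivative of `s ↦ (x - s) ^ e` (rpow) at a point `t < x`. -/
lemma rpow_sub_hasDerivAt (x e t : ℝ) (ht : t < x) :
    HasDerivAt (fun s : ℝ => (x - s) ^ e) (-(e * (x - t) ^ (e - 1))) t := by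
  have hpos : (0:ℝ) < x - t := by linarith
  have h1 : HasDerivAt (fun s : ℝ => x - s) (-1) t := (hasDerivAt_id t).const_sub x
  have h2 := (Real.hasDerivAt_rpow_const (x := x - t) (p := e) (Or.inl hpos.ne')).comp t h1
  simpa [Function.comp_def] using h2.congr_deriv (by ring)

/-- With `F(x, λ) = x^{−a}(x − 1)^{−b}(x − λ)^{−c}` and
`h(x, λ) = x^{1−a}(x − 1)^{1−b}(x − λ)^{−1−c}` (real powers, `x > 1`, `λ < 0`),
the hypergeometric identity
`λ(1 − λ)·F_{λλ} + (a + c − λ(a + b + 2c))·F_λ − c(a + b + c − 1)·F = c·∂h/∂x`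
holds. -/
theorem stmt_14 (a b c : ℝ)
    (F h : ℝ → ℝ → ℝ)
    (hF : ∀ x l : ℝ, F x l = x ^ (-a) * (x - 1) ^ (-b) * (x - l) ^ (-c))
    (hh : ∀ x l : ℝ, h x l = x ^ (1 - a) * (x - 1) ^ (1 - b) * (x - l) ^ (-1 - c))
    (x lam : ℝ) (hx : 1 < x) (hlam : lam < 0) :
    lam * (1 - lam) * deriv (fun t : ℝ => deriv (fun s : ℝ => F x s) t) lam
      + (a + c - lam * (a + b + 2 * c)) * deriv (fun s : ℝ => F x s) lam
      - c * (a + b + c - 1) * F x lam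
    = c * deriv (fun t : ℝ => h t lam) x := by
  have hx0 : (0:ℝ) < x := by linarith
  have hx1 : (0:ℝ) < x - 1 := by linarith
  have hxl : (0:ℝ) < x - lam := by linarith
  set K : ℝ := x ^ (-a) * (x - 1) ^ (-b) with hK
  -- first λ-derivative on a neighborhood
  have key : ∀ t : ℝ, t < x →
      HasDerivAt (fun s : ℝ => F x s) (K * (c * (x - t) ^ (-c - 1))) t := by
    intro t ht
    have h1 := (rpow_sub_hasDerivAt x (-c) t ht).const_mul K
    have : (fun s : ℝ => F x s) = fun s : ℝ => K * (x - s) ^ (-c) := by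
      funext s; rw [hF]
    rw [this]
    refine h1.congr_deriv ?_
    ring_nf
  have hd1 : deriv (fun s : ℝ => F x s) lam = K * (c * (x - lam) ^ (-c - 1)) :=
    (key lam (by linarith)).deriv
  -- second λ-derivative
  have heq : deriv (fun s : ℝ => F x s) =ᶠ[nhds lam]
      fun t : ℝ => K * (c * (x - t) ^ (-c - 1)) := by
    filter_upwards [Iio_mem_nhds (show lam < x by linarith)] with t ht
    exact (key t ht).deriv
  have hd2 : deriv (fun t : ℝ => deriv (fun s : ℝ => F x s) t) lam
      = K * (c * (c + 1) * (x - lam) ^ (-c - 2)) := by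
    rw [Filter.EventuallyEq.deriv_eq heq]
    have h1 := ((rpow_sub_hasDerivAt x (-c - 1) lam (by linarith)).const_mul c).const_mul K
    have := h1.deriv
    rw [this]
    have : (-c - 1 - 1 : ℝ) = -c - 2 := by ring
    rw [this]; ring
  -- x-derivative of h
  have hu : HasDerivAt (fun t : ℝ => t ^ (1 - a)) ((1 - a) * x ^ (1 - a - 1)) x :=
    Real.hasDerivAt_rpow_const (Or.inl hx0.ne')
  have hv : HasDerivAt (fun t : ℝ => (t - 1) ^ (1 - b)) ((1 - b) * (x - 1) ^ (1 - b - 1)) x := by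
    have h1 : HasDerivAt (fun t : ℝ => t - 1) 1 x := (hasDerivAt_id x).sub_const 1
    have h2 := (Real.hasDerivAt_rpow_const (x := x - 1) (p := 1 - b) (Or.inl hx1.ne')).comp x h1
    simpa [Function.comp_def] using h2
  have hw : HasDerivAt (fun t : ℝ => (t - lam) ^ (-1 - c))
      ((-1 - c) * (x - lam) ^ (-1 - c - 1)) x := by
    have h1 : HasDerivAt (fun t : ℝ => t - lam) 1 x := (hasDerivAt_id x).sub_const lam
    have h2 := (Real.hasDerivAt_rpow_const (x := x - lam) (p := -1 - c) (Or.inl hxl.ne')).comp x h1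
    simpa [Function.comp_def] using h2
  have hprod := (hu.mul hv).mul hw
  have hdh : deriv (fun t : ℝ => h t lam)
      = deriv (fun t : ℝ => t ^ (1 - a) * (t - 1) ^ (1 - b) * (t - lam) ^ (-1 - c)) := by
    funext t; congr 1; funext s; rw [hh]
  rw [hdh, show deriv (fun t : ℝ => t ^ (1 - a) * (t - 1) ^ (1 - b) * (t - lam) ^ (-1 - c)) x = _ from hprod.deriv, hd1, hd2, hF]
  simp only [Pi.mul_apply]
  -- rewrite all rpows in terms of base powers
  have P := x ^ (-a); have Q := (x - 1) ^ (-b)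
  have ex1 : x ^ (1 - a) = x * x ^ (-a) := by
    rw [show (1 - a : ℝ) = -a + 1 by ring, Real.rpow_add hx0, Real.rpow_one]; ring
  have ex2 : x ^ (1 - a - 1) = x ^ (-a) := by norm_num
  have ey1 : (x - 1) ^ (1 - b) = (x - 1) * (x - 1) ^ (-b) := by
    rw [show (1 - b : ℝ) = -b + 1 by ring, Real.rpow_add hx1, Real.rpow_one]; ring
  have ey2 : (x - 1) ^ (1 - b - 1) = (x - 1) ^ (-b) := by norm_num
  have step : ∀ p : ℝ, (x - lam) ^ (p + 1) = (x - lam) ^ p * (x - lam) := fun p => by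
    rw [Real.rpow_add hxl, Real.rpow_one]
  have ez1 : (x - lam) ^ (-c - 1) = (x - lam) ^ (-c - 2) * (x - lam) := by
    conv_lhs => rw [show (-c - 1 : ℝ) = (-c - 2) + 1 by ring, step]
  have ez0 : (x - lam) ^ (-c) = (x - lam) ^ (-c - 2) * (x - lam) * (x - lam) := by
    conv_lhs => rw [show (-c : ℝ) = (-c - 1) + 1 by ring, step, ez1]
  have ez1' : (x - lam) ^ (-1 - c) = (x - lam) ^ (-c - 2) * (x - lam) := by
    rw [show (-1 - c : ℝ) = -c - 1 by ring]; exact ez1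
  have ez2 : (x - lam) ^ (-1 - c - 1) = (x - lam) ^ (-c - 2) := by
    rw [show (-1 - c - 1 : ℝ) = -c - 2 by ring]
  rw [ex1, ex2, ey1, ey2, ez0, ez1, ez1', ez2, hK]
  ring
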